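/- Let H ⊂ G be an inclusion of topological groups. For a compact Hausdorff space X, the group C(X, G) of continuous maps acts naturally on the pointed set C(X, G/H) (pointed by the constant map at the coset H), and the quotient functor X ↦ C(X, G/H)/C(X, G) is split exact: for every pushout square X₁₂ → X₁, X₁₂ → X₂ of compact Hausdorff spaces with pushout X, where X₁₂ → X₁ admits a continuous retraction, the induced map of pointed sets C(X, G/H)/C(X,G) → (C(X₁, G/H)/C(X₁,G)) ×_{C(X₁₂, G/H)/C(X₁₂,G)} (C(X₂, G/H)/C(X₂,G)) is surjective with trivial kernel. -/

import Mathlib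

open Function

/-- The orbit relation on `C(X, G/H)` under the pointwise left action of the group
`C(X, G)` of continuous `G`-valued maps: `f ~ f'` iff `f' = g • f` for some
continuous `g : X → G`. -/
def stmt1Rel (G : Type) [Group G] [TopologicalSpace G] (H : Subgroup G)
    (X : Type) [TopologicalSpace X] (f f' : C(X, G ⧸ H)) : Prop :=
  ∃ g : C(X, G), ∀ x : X, f' x = (g x) • (f x)

/-- For an inclusion of topological groups `H ⊆ G`, the functor
`X ↦ C(X, G/H)/C(X, G)` on compact Hausdorff spaces is split exact: for every
pushout square of compact Hausdorff spaces with `i1 : X₁₂ → X₁` split injective,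
the map to the fiber product of pointed orbit sets is surjective with trivial
kernel (the base point being the class of the constant map at the trivial coset). -/
theorem stmt_1
    (G : Type) [Group G] [TopologicalSpace G] [IsTopologicalGroup G] (H : Subgroup G)
    (X12 X1 X2 X : Type) [TopologicalSpace X12] [TopologicalSpace X1]
    [TopologicalSpace X2] [TopologicalSpace X]
    [CompactSpace X12] [CompactSpace X1] [CompactSpace X2] [CompactSpace X]
    [T2Space X12] [T2Space X1] [T2Space X2] [T2Space X]
    (i1 : C(X12, X1)) (i2 : C(X12, X2)) (j1 : C(X1, X)) (j2 : C(X2, X))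
    (hcomm : j1.comp i1 = j2.comp i2)
    -- `X` is the pushout of `i1, i2` in the category of topological spaces:
    (hpo : ∀ (Z : Type) [TopologicalSpace Z] (g1 : C(X1, Z)) (g2 : C(X2, Z)),
      g1.comp i1 = g2.comp i2 → ∃! g : C(X, Z), g.comp j1 = g1 ∧ g.comp j2 = g2)
    -- `i1` is split injective: it admits a continuous retraction:
    (r : C(X1, X12)) (hr : r.comp i1 = ContinuousMap.id X12) :
    -- trivial kernel:
    (∀ f : C(X, G ⧸ H),
        stmt1Rel G H X1 (f.comp j1) (ContinuousMap.const X1 ((1 : G) : G ⧸ H)) →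
        stmt1Rel G H X2 (f.comp j2) (ContinuousMap.const X2 ((1 : G) : G ⧸ H)) →
        stmt1Rel G H X f (ContinuousMap.const X ((1 : G) : G ⧸ H))) ∧
    -- surjectivity onto the fiber product:
    (∀ (f1 : C(X1, G ⧸ H)) (f2 : C(X2, G ⧸ H)),
        stmt1Rel G H X12 (f1.comp i1) (f2.comp i2) →
        ∃ f : C(X, G ⧸ H),
          stmt1Rel G H X1 (f.comp j1) f1 ∧ stmt1Rel G H X2 (f.comp j2) f2) := by
  have hri : ∀ z : X12, r (i1 z) = z := fun z => ContinuousMap.congr_fun hr z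
  have hj : ∀ z : X12, j1 (i1 z) = j2 (i2 z) := fun z => ContinuousMap.congr_fun hcomm z
  constructor
  · rintro f ⟨g1, hg1⟩ ⟨g2, hg2⟩
    -- corrected g1
    set g1' : C(X1, G) := ⟨fun x => g2 (i2 (r x)) * (g1 (i1 (r x)))⁻¹ * g1 x, by
      fun_prop⟩ with hg1'def
    have hagree : g1'.comp i1 = (g2.comp i2) := by
      ext z
      simp [hg1'def, hri z]
    obtain ⟨g, ⟨hgj1, hgj2⟩, -⟩ := hpo G g1' g2 hagree
    -- the glued map trivializes f
    refine ⟨g, ?_⟩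
    -- use uniqueness in the pushout property for Z = G ⧸ H
    have key : (⟨fun p => g p • f p, g.continuous.smul f.continuous⟩ : C(X, G ⧸ H)) =
        ContinuousMap.const X ((1 : G) : G ⧸ H) := by
      obtain ⟨u, -, huniq⟩ := hpo (G ⧸ H) (ContinuousMap.const X1 ((1 : G) : G ⧸ H))
        (ContinuousMap.const X2 ((1 : G) : G ⧸ H)) (by ext z; rfl)
      have h1 : (⟨fun p => g p • f p, g.continuous.smul f.continuous⟩ : C(X, G ⧸ H)) = u := by
        apply huniq
        constructor
        · ext x
          have hx1 : g (j1 x) = g1' x := ContinuousMap.congr_fun hgj1 x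
          have e1 : ((1 : G) : G ⧸ H) = g1 x • f (j1 x) := hg1 x
          have e2 : ((1 : G) : G ⧸ H) = g2 (i2 (r x)) • f (j2 (i2 (r x))) := hg2 (i2 (r x))
          have e3 : f (j1 (i1 (r x))) = f (j2 (i2 (r x))) := by rw [hj (r x)]
          have e4 : ((1 : G) : G ⧸ H) = g1 (i1 (r x)) • f (j1 (i1 (r x))) := hg1 (i1 (r x))
          simp only [ContinuousMap.comp_apply, ContinuousMap.coe_mk,
            ContinuousMap.const_apply, hx1, hg1'def]
          rw [mul_smul, mul_smul, ← e1, e4, inv_smul_smul, e3, ← e2, ← e3]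
          exact e4
        · ext y
          have hy : g (j2 y) = g2 y := ContinuousMap.congr_fun hgj2 y
          simp only [ContinuousMap.comp_apply, ContinuousMap.coe_mk,
            ContinuousMap.const_apply, hy]
          exact (hg2 y).symm
      have h2 : ContinuousMap.const X ((1 : G) : G ⧸ H) = u := by
        apply huniq; constructor <;> ext <;> rfl
      rw [h1, h2]
    intro x
    exact (ContinuousMap.congr_fun key x).symm
  · rintro f1 f2 ⟨g, hg⟩
    set f1' : C(X1, G ⧸ H) := ⟨fun x => g (r x) • f1 x, by fun_prop⟩ with hf1'def
    have hagree : f1'.comp i1 = f2.comp i2 := by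
      ext z
      simp only [ContinuousMap.comp_apply, hf1'def, ContinuousMap.coe_mk, hri z]
      exact (hg z).symm
    obtain ⟨f, ⟨hfj1, hfj2⟩, -⟩ := hpo (G ⧸ H) f1' f2 hagree
    refine ⟨f, ⟨⟨fun x => (g (r x))⁻¹, by fun_prop⟩, fun x => ?_⟩,
      ⟨ContinuousMap.const X2 (1 : G), fun y => ?_⟩⟩
    · have hx : f (j1 x) = f1' x := ContinuousMap.congr_fun hfj1 x
      simp only [ContinuousMap.comp_apply, ContinuousMap.coe_mk, hx, hf1'def,
        inv_smul_smul]
    · have hy : f (j2 y) = f2 y := ContinuousMap.congr_fun hfj2 y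
      simp only [ContinuousMap.comp_apply, ContinuousMap.coe_mk,
        ContinuousMap.const_apply, hy, one_smul]
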